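/- Let Y be a majorizing sublattice of an Archimedean vector lattice X. Then every 0 ≤ x in the relative uniform adherence of Y in X can be written as the supremum in X, and the relative uniform limit, of an increasing sequence in Y₊. -/

import Mathlib

open Filter Set

section Defs

variable (X : Type*) [Lattice X] [AddCommGroup X] [Module ℝ X]

/-- Archimedean property for a vector lattice. -/
def VLArchimedean : Prop := ∀ x y : X, (∀ n : ℕ, n • x ≤ y) → x ≤ 0

variable {X}

/-- `Y` is a sublattice: a linear subspace closed under `⊔`. -/
def IsVLSublattice (Y : Set X) : Prop :=
  (0 : X) ∈ Y ∧ (∀ a ∈ Y, ∀ b ∈ Y, a + b ∈ Y) ∧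
    (∀ (c : ℝ), ∀ a ∈ Y, c • a ∈ Y) ∧ (∀ a ∈ Y, ∀ b ∈ Y, a ⊔ b ∈ Y)

/-- `Y` is majorizing in `X`. -/
def Majorizing (Y : Set X) : Prop := ∀ x : X, 0 ≤ x → ∃ y ∈ Y, x ≤ y

/-- Relative uniform convergence of a sequence with regulator `e`. -/
def RUTendsto (x : ℕ → X) (l e : X) : Prop :=
  0 ≤ e ∧ ∀ ε : ℝ, 0 < ε → ∃ N, ∀ n ≥ N, |x n - l| ≤ ε • e

/-- Relative uniform Cauchy sequence with regulator `e`. -/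
def RUCauchy (x : ℕ → X) (e : X) : Prop :=
  0 ≤ e ∧ ∀ ε : ℝ, 0 < ε → ∃ N, ∀ n ≥ N, ∀ m ≥ N, |x n - x m| ≤ ε • e

/-- Relative uniform convergence of a net with regulator `e`. -/
def RUTendstoNet {ι : Type*} [Preorder ι] (x : ι → X) (l e : X) : Prop :=
  0 ≤ e ∧ ∀ ε : ℝ, 0 < ε → ∃ α₀, ∀ α ≥ α₀, |x α - l| ≤ ε • e

/-- Relative uniform Cauchy net with regulator `e`. -/
def RUCauchyNet {ι : Type*} [Preorder ι] (x : ι → X) (e : X) : Prop :=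
  0 ≤ e ∧ ∀ ε : ℝ, 0 < ε → ∃ α₀, ∀ α ≥ α₀, ∀ β ≥ α₀, |x α - x β| ≤ ε • e

/-- Uniform adherence of a set: all relative uniform limits of sequences from `A`. -/
def uAdh (A : Set X) : Set X :=
  {l | ∃ x : ℕ → X, (∀ n, x n ∈ A) ∧ ∃ e, RUTendsto x l e}

/-- `A` is uniformly closed. -/
def RUClosed (A : Set X) : Prop := uAdh A ⊆ A

/-- Uniform closure: the least uniformly closed superset of `A`. -/
def uClosure (A : Set X) : Set X := ⋂₀ {B : Set X | A ⊆ B ∧ RUClosed B}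

variable (X)

/-- Relative uniform completeness (for sequences). -/
def RUComplete : Prop :=
  ∀ x : ℕ → X, (∃ e, RUCauchy x e) → ∃ l e, RUTendsto x l e

variable {X}

/-- Relative uniform completeness of a sublattice `Y` (regulators taken in `Y`). -/
def RUCompleteIn (Y : Set X) : Prop :=
  ∀ x : ℕ → X, (∀ n, x n ∈ Y) → (∃ e ∈ Y, RUCauchy x e) →
    ∃ l ∈ Y, ∃ e ∈ Y, RUTendsto x l e

/-- An (order) ideal of a vector lattice: a solid linear subspace. -/
def IsVLIdeal (I : Set X) : Prop :=
  (0 : X) ∈ I ∧ (∀ a ∈ I, ∀ b ∈ I, a + b ∈ I) ∧ (∀ (c : ℝ), ∀ a ∈ I, c • a ∈ I) ∧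
    ∀ x : X, ∀ y ∈ I, |x| ≤ |y| → x ∈ I

/-- The ideal generated by a set. -/
def idealGen (Y : Set X) : Set X := ⋂₀ {I : Set X | Y ⊆ I ∧ IsVLIdeal I}

/-- `B` is a projection band: an ideal along which the space decomposes. -/
def IsProjectionBand (B : Set X) : Prop :=
  IsVLIdeal B ∧ ∀ x : X, ∃ b ∈ B, ∃ d : X, (∀ y ∈ B, |d| ⊓ |y| = 0) ∧ x = b + d

end Defs
theorem adherence_of_majorizing_sublattice_increasing_sup_and_limit
    {X : Type*} [Lattice X] [AddCommGroup X] [Module ℝ X]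
    [CovariantClass X X (· + ·) (· ≤ ·)] [PosSMulMono ℝ X]
    (harch : VLArchimedean X)
    {Y : Set X} (hY : IsVLSublattice Y) (hmaj : Majorizing Y)
    {x : X} (hx0 : 0 ≤ x) (hx : x ∈ uAdh Y) :
    ∃ y : ℕ → X, (∀ n, y n ∈ Y) ∧ (∀ n, 0 ≤ y n) ∧ Monotone y ∧
      IsLUB (Set.range y) x ∧ ∃ e, RUTendsto y x e := by

  classical
  obtain ⟨z, hzY, e, he0, hconv⟩ := hx
  obtain ⟨u', hu'Y, heu'⟩ := hmaj e he0
  obtain ⟨hY0, hYadd, hYsmul, hYsup⟩ := hY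
  set u : X := u' ⊔ 0 with hu
  have huY : u ∈ Y := hYsup _ hu'Y _ hY0
  have hu0 : (0 : X) ≤ u := le_sup_right
  have heu : e ≤ u := heu'.trans le_sup_left
  -- scalar monotonicity on u
  have hsm : ∀ c c' : ℝ, c ≤ c' → c • u ≤ c' • u := by
    intro c c' hcc
    have h0 : (0 : X) ≤ (c' - c) • u := by
      have := smul_le_smul_of_nonneg_left hu0 (sub_nonneg.2 hcc)
      simpa using this
    have : c • u + 0 ≤ c • u + (c' - c) • u := add_le_add_right h0 _
    calc c • u = c • u + 0 := by rw [add_zero]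
      _ ≤ c • u + (c' - c) • u := this
      _ = c' • u := by rw [← add_smul]; ring_nf
  have habs : ∀ a : X, a ≤ 0 → |a| = -a := by
    intro a ha
    have h1 : a ≤ -a := ha.trans (neg_nonneg.2 ha)
    rw [abs, sup_eq_right.2 h1]
  -- select indices
  have hsel : ∀ k : ℕ, ∃ N, ∀ n ≥ N, |z n - x| ≤ ((1/2:ℝ)^k) • e :=
    fun k => hconv _ (by positivity)
  choose g hg using hsel
  set y0 : ℕ → X := fun k => (z (g k) - ((1/2:ℝ)^k) • u) ⊔ 0 with hy0
  have habse : ∀ k, |z (g k) - x| ≤ ((1/2:ℝ)^k) • u := by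
    intro k
    exact (hg k (g k) le_rfl).trans (smul_le_smul_of_nonneg_left heu (by positivity))
  have hy0Y : ∀ k, y0 k ∈ Y := by
    intro k
    refine hYsup _ ?_ _ hY0
    have h : z (g k) - ((1/2:ℝ)^k) • u = z (g k) + (-((1/2:ℝ)^k)) • u := by
      rw [neg_smul, ← sub_eq_add_neg]
    rw [h]
    exact hYadd _ (hzY _) _ (hYsmul _ _ huY)
  have hy0le : ∀ k, y0 k ≤ x := by
    intro k
    refine sup_le ?_ hx0
    have h1 : z (g k) - x ≤ ((1/2:ℝ)^k) • u := (le_abs_self _).trans (habse k)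
    exact sub_le_comm.mp h1
  have hkey : ∀ k, x - y0 k ≤ (2 * (1/2:ℝ)^k) • u := by
    intro k
    have h1 : x - z (g k) ≤ ((1/2:ℝ)^k) • u := by
      have h := (neg_le_abs (z (g k) - x)).trans (habse k)
      rwa [neg_sub] at h
    have h2 : z (g k) - ((1/2:ℝ)^k) • u ≤ y0 k := le_sup_left
    have h3 : x - y0 k ≤ x - (z (g k) - ((1/2:ℝ)^k) • u) := sub_le_sub_left h2 x
    calc x - y0 k ≤ (x - z (g k)) + ((1/2:ℝ)^k) • u := by
          refine h3.trans_eq ?_; abel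
      _ ≤ ((1/2:ℝ)^k) • u + ((1/2:ℝ)^k) • u := add_le_add_left h1 _
      _ = (2 * (1/2:ℝ)^k) • u := by rw [← add_smul]; ring_nf
  set w : ℕ → X := fun k => partialSups y0 k with hw
  have hwY : ∀ k, w k ∈ Y := by
    intro k
    induction k with
    | zero => simpa [hw] using hy0Y 0
    | succ n ih =>
        have : w (n+1) = w n ⊔ y0 (n+1) := by simp [hw, partialSups_succ]
        rw [this]; exact hYsup _ ih _ (hy0Y _)
  have hy0w : ∀ k, y0 k ≤ w k := fun k => le_partialSups y0 k
  have hw0 : ∀ k, 0 ≤ w k := fun k => le_sup_right.trans (hy0w k)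
  have hwmono : Monotone w := (partialSups y0).monotone
  have hwle : ∀ k, w k ≤ x := fun k => partialSups_le _ _ _ (fun j _ => hy0le j)
  have hwkey : ∀ k, x - w k ≤ (2 * (1/2:ℝ)^k) • u :=
    fun k => (sub_le_sub_left (hy0w k) x).trans (hkey k)
  refine ⟨w, hwY, hw0, hwmono, ⟨?_, ?_⟩, u, hu0, ?_⟩
  · rintro _ ⟨k, rfl⟩; exact hwle k
  · intro b hb
    have hbw : ∀ k, w k ≤ b := fun k => hb ⟨k, rfl⟩
    have hxb : ∀ k, x - b ≤ (2 * (1/2:ℝ)^k) • u :=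
      fun k => (sub_le_sub_left (hbw k) x).trans (hwkey k)
    have harch' : x - b ≤ 0 := by
      refine harch _ u (fun n => ?_)
      obtain ⟨k, hk⟩ := exists_pow_lt_of_lt_one
        (show (0:ℝ) < 1/(2*(n+1)) by positivity) (show (1/2:ℝ) < 1 by norm_num)
      have hc : (n : ℝ) * (2 * (1/2:ℝ)^k) ≤ 1 := by
        have hn1 : (n : ℝ) ≤ n + 1 := by linarith
        have h2 : (1/2:ℝ)^k < 1/(2*(n+1)) := hk
        have hnn : (0:ℝ) < 2*((n:ℝ)+1) := by positivity
        rw [lt_div_iff₀ hnn] at h2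
        nlinarith [pow_nonneg (by norm_num : (0:ℝ) ≤ 1/2) k]
      have h1 : (n : ℝ) • (x - b) ≤ (n : ℝ) • ((2 * (1/2:ℝ)^k) • u) :=
        smul_le_smul_of_nonneg_left (hxb k) (by positivity)
      have h2 : (n : ℝ) • ((2 * (1/2:ℝ)^k) • u) = ((n : ℝ) * (2 * (1/2:ℝ)^k)) • u := by
        rw [smul_smul]
      have h3 : ((n : ℝ) * (2 * (1/2:ℝ)^k)) • u ≤ (1:ℝ) • u := hsm _ _ hc
      have : (n : ℝ) • (x - b) ≤ u := by
        rw [h2] at h1; exact h1.trans (by simpa using h3)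
      simpa [Nat.cast_smul_eq_nsmul] using this
    exact le_of_sub_nonpos harch'
  · intro ε hε
    obtain ⟨N, hN⟩ := exists_pow_lt_of_lt_one
      (show (0:ℝ) < ε/2 by positivity) (show (1/2:ℝ) < 1 by norm_num)
    refine ⟨N, fun n hn => ?_⟩
    have h1 : |w n - x| = x - w n := by
      rw [habs _ (sub_nonpos.2 (hwle n))]; abel
    rw [h1]
    refine (hwkey n).trans (hsm _ _ ?_)
    have hmono : (1/2:ℝ)^n ≤ (1/2:ℝ)^N :=
      pow_le_pow_of_le_one (by norm_num) (by norm_num) hn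
    linarith
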